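/- arXiv:math/0211091 — 3 statements merged into one kernel-verified Lean document; each statement's English description precedes it below -/
import Mathlib

section
/- Let V and W be closed subspaces of a real Hilbert space H. Then V and W are commensurable (i.e. P_V - P_W is compact) if and only if both P_{W⊥}P_V and P_{V⊥}P_W are compact operators. Moreover, if V and W are commensurable, then the subspaces V ∩ W⊥ and V⊥ ∩ W are finite-dimensional. -/
open scoped RealInnerProductSpace

variable {H : Type*} [NormedAddCommGroup H] [InnerProductSpace ℝ H] [CompleteSpace H]

/-- The orthogonal projection onto a closed (complete) subspace, as an operator `H →L[ℝ] H`. -/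
noncomputable def projCLM (V : Submodule ℝ H) [V.HasOrthogonalProjection] : H →L[ℝ] H :=
  V.subtypeL.comp V.orthogonalProjectionOnto

/-- Two closed subspaces are commensurable if the difference of the orthogonal projections
onto them is a compact operator. -/
def AreCommensurable (V W : Submodule ℝ H) [V.HasOrthogonalProjection]
    [W.HasOrthogonalProjection] : Prop :=
  IsCompactOperator ⇑(projCLM V - projCLM W)

open Metric in
lemma compact_of_selfAdjoint_sq_compact {D : H →L[ℝ] H}
    (hsa : ∀ x y : H, ⟪D x, y⟫ = ⟪x, D y⟫)
    (h2 : IsCompactOperator (fun x => D (D x))) : IsCompactOperator ⇑D := by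
  have key : ∀ z : H, ‖D z‖ ^ 2 ≤ ‖D (D z)‖ * ‖z‖ := by
    intro z
    calc ‖D z‖ ^ 2 = ⟪D z, D z⟫ := (real_inner_self_eq_norm_sq _).symm
    _ = ⟪D (D z), z⟫ := (hsa (D z) z).symm
    _ ≤ ‖D (D z)‖ * ‖z‖ := real_inner_le_norm _ _
  have h2' : IsCompactOperator ⇑((D.comp D : H →L[ℝ] H) : H →ₗ[ℝ] H) := h2
  have hS : TotallyBounded (⇑(D.comp D) '' closedBall 0 1) :=
    ((h2'.isCompact_closure_image_closedBall 1).totallyBounded).subset subset_closure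
  rw [show (⇑D : H → H) = ⇑((D : H →ₗ[ℝ] H)) from rfl] at *
  rw [isCompactOperator_iff_isCompact_closure_image_closedBall (D : H →ₗ[ℝ] H) one_pos]
  refine TotallyBounded.isCompact_of_isClosed ?_ isClosed_closure
  refine TotallyBounded.closure ?_
  rw [Metric.totallyBounded_iff]
  intro ε hε
  obtain ⟨t, hts, htf, hcover⟩ := totallyBounded_iff_subset.mp hS _
    (Metric.dist_mem_uniformity (show (0:ℝ) < ε^2/4 by positivity))
  choose! g hg1 hg2 using fun y (hy : y ∈ t) => hts hy
  refine ⟨⇑D '' (g '' t), (htf.image _).image _, ?_⟩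
  rintro _ ⟨x, hx, rfl⟩
  have hx2 : D (D x) ∈ ⋃ y ∈ t, { p | (p, y) ∈ {p : H × H | dist p.1 p.2 < ε^2/4} } :=
    hcover ⟨x, hx, rfl⟩
  simp only [Set.mem_iUnion, Set.mem_setOf_eq] at hx2
  obtain ⟨y, hy, hdy⟩ := hx2
  refine Set.mem_iUnion₂.mpr ⟨D (g y), ⟨g y, ⟨y, hy, rfl⟩, rfl⟩, ?_⟩
  have hgy : g y ∈ closedBall (0:H) 1 := hg1 y hy
  have hDgy : D (D (g y)) = y := hg2 y hy
  have h1 : ‖D x - D (g y)‖ ^ 2 ≤ ‖D (D x) - y‖ * ‖x - g y‖ := by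
    have := key (x - g y)
    simpa [map_sub, hDgy] using this
  have hxy : ‖x - g y‖ ≤ 2 := by
    have h1 := mem_closedBall_zero_iff.mp hx
    have h2 := mem_closedBall_zero_iff.mp hgy
    calc ‖x - g y‖ ≤ ‖x‖ + ‖g y‖ := norm_sub_le _ _
    _ ≤ 2 := by linarith
  have hd : ‖D (D x) - y‖ < ε^2/4 := by rwa [dist_eq_norm] at hdy
  have h3 : ‖D x - D (g y)‖ ^ 2 < ε ^ 2 := by
    calc ‖D x - D (g y)‖ ^ 2 ≤ ‖D (D x) - y‖ * ‖x - g y‖ := h1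
    _ ≤ ‖D (D x) - y‖ * 2 := by nlinarith [norm_nonneg (D (D x) - y)]
    _ < ε^2/4 * 2 := by nlinarith
    _ < ε ^ 2 := by nlinarith
  rw [mem_ball, dist_eq_norm]
  exact lt_of_pow_lt_pow_left₀ 2 hε.le (by simpa using h3)

omit [CompleteSpace H] in
lemma projCLM_apply (V : Submodule ℝ H) [V.HasOrthogonalProjection] (x : H) :
    projCLM V x = (V.orthogonalProjectionOnto x : H) := rfl

omit [CompleteSpace H] in
lemma projCLM_orthogonal_apply (V : Submodule ℝ H) [V.HasOrthogonalProjection] (x : H) :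
    projCLM Vᗮ x = x - projCLM V x := by
  simp [projCLM_apply, ← Submodule.starProjection_apply, Submodule.starProjection_orthogonal_val]

omit [CompleteSpace H] in
lemma projCLM_apply_of_mem {V : Submodule ℝ H} [V.HasOrthogonalProjection] {x : H}
    (hx : x ∈ V) : projCLM V x = x := by
  rw [projCLM_apply, ← Submodule.starProjection_apply, Submodule.starProjection_eq_self_iff.mpr hx]

omit [CompleteSpace H] in
lemma projCLM_apply_of_mem_orthogonal {V : Submodule ℝ H} [V.HasOrthogonalProjection] {x : H}
    (hx : x ∈ Vᗮ) : projCLM V x = 0 := by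
  rw [projCLM_apply, Submodule.orthogonalProjectionOnto_apply_of_mem_orthogonal hx,
    Submodule.coe_zero]

lemma fd_aux (V W : Submodule ℝ H) [CompleteSpace V] [CompleteSpace W]
    (h : IsCompactOperator ⇑(projCLM V - projCLM W)) :
    FiniteDimensional ℝ ↥(V ⊓ Wᗮ) := by
  set U : Submodule ℝ H := V ⊓ Wᗮ with hU
  have hUclosed : IsClosed (U : Set H) := by
    have h1 : IsClosed (V : Set H) :=
      (completeSpace_coe_iff_isComplete.mp ‹_›).isClosed
    have h2 : IsClosed ((Wᗮ : Submodule ℝ H) : Set H) := W.isClosed_orthogonal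
    have : (U : Set H) = (V : Set H) ∩ (Wᗮ : Set H) := rfl
    rw [this]
    exact h1.inter h2
  set incl : U →L[ℝ] H := U.subtypeL with hincl_def
  have hid : (⇑(projCLM V - projCLM W) ∘ ⇑incl) = ⇑incl := by
    funext u
    have huV : (u : H) ∈ V := u.2.1
    have huW : (u : H) ∈ Wᗮ := u.2.2
    have hiu : incl u = (u : H) := rfl
    simp only [Function.comp_apply, ContinuousLinearMap.sub_apply, hiu,
      projCLM_apply_of_mem huV, projCLM_apply_of_mem_orthogonal huW, sub_zero]
  have hincl : IsCompactOperator ⇑((incl : U →ₗ[ℝ] H)) := by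
    have := h.comp_clm incl
    rwa [hid] at this
  have himg : IsCompact (closure (⇑incl '' Metric.closedBall 0 1)) :=
    hincl.isCompact_closure_image_closedBall 1
  have himg_eq : (⇑incl '' Metric.closedBall 0 1) = (U : Set H) ∩ Metric.closedBall (0:H) 1 := by
    ext x
    constructor
    · rintro ⟨u, hu, rfl⟩
      refine ⟨u.2, ?_⟩
      rw [Metric.mem_closedBall, dist_zero_right]
      exact mem_closedBall_zero_iff.mp hu
    · rintro ⟨hxU, hx⟩
      refine ⟨⟨x, hxU⟩, ?_, rfl⟩
      rw [Metric.mem_closedBall, dist_zero_right]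
      simpa [Metric.mem_closedBall, dist_zero_right] using hx
  have himg_closed : IsClosed (⇑incl '' Metric.closedBall 0 1) := by
    rw [himg_eq]; exact hUclosed.inter Metric.isClosed_closedBall
  have himg_cpt : IsCompact (⇑incl '' Metric.closedBall 0 1) := by
    rwa [himg_closed.closure_eq] at himg
  have hball : IsCompact (Metric.closedBall (0 : U) 1) := by
    rw [Topology.IsEmbedding.subtypeVal.isCompact_iff]
    exact himg_cpt
  exact FiniteDimensional.of_isCompact_closedBall₀ ℝ one_pos hball

/-- `V` and `W` are commensurable iff `P_{W^⊥} P_V` and `P_{V^⊥} P_W` are both compact;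
moreover, if `V` and `W` are commensurable then `V ∩ W^⊥` and `V^⊥ ∩ W` are
finite dimensional. -/
theorem areCommensurable_iff_and_finiteDimensional_of_areCommensurable
    (V W : Submodule ℝ H) [CompleteSpace V] [CompleteSpace W] :
    (AreCommensurable V W ↔
      IsCompactOperator ⇑((projCLM Wᗮ).comp (projCLM V)) ∧
        IsCompactOperator ⇑((projCLM Vᗮ).comp (projCLM W))) ∧
    (AreCommensurable V W →
      FiniteDimensional ℝ ↥(V ⊓ Wᗮ) ∧ FiniteDimensional ℝ ↥(Vᗮ ⊓ W)) := by
  set D := projCLM V - projCLM W with hD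
  constructor
  · constructor
    · intro h
      constructor
      · have := h.comp_clm (projCLM V)
        convert this using 1
        · rfl
        funext x
        have h1 : projCLM V (projCLM V x) = projCLM V x :=
          projCLM_apply_of_mem (Submodule.coe_mem (V.orthogonalProjectionOnto x))
        simp only [ContinuousLinearMap.coe_comp', Function.comp_apply, hD,
          ContinuousLinearMap.sub_apply, projCLM_orthogonal_apply, h1]
      · have := (h.neg).comp_clm (projCLM W)
        convert this using 1
        · rfl
        funext x
        have h2 : projCLM W (projCLM W x) = projCLM W x :=
          projCLM_apply_of_mem (Submodule.coe_mem (W.orthogonalProjectionOnto x))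
        simp only [ContinuousLinearMap.coe_comp', Function.comp_apply, hD, Pi.neg_apply,
          ContinuousLinearMap.sub_apply, projCLM_orthogonal_apply, h2]
        abel
    · rintro ⟨hA, hB⟩
      have hsa : ∀ x y : H, ⟪D x, y⟫ = ⟪x, D y⟫ := by
        intro x y
        simp only [hD, ContinuousLinearMap.sub_apply, inner_sub_left, inner_sub_right,
          projCLM_apply]
        simp only [← Submodule.starProjection_apply, Submodule.inner_starProjection_left_eq_right]
      have hsq : IsCompactOperator (fun x => D (D x)) := by
        have := hA.add hB
        convert this using 1
        · rfl
        funext x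
        simp only [hD, ContinuousLinearMap.sub_apply, Pi.add_apply,
          ContinuousLinearMap.coe_comp', Function.comp_apply, projCLM_orthogonal_apply,
          map_sub]
        have h1 : projCLM V (projCLM V x) = projCLM V x :=
          projCLM_apply_of_mem (Submodule.coe_mem (V.orthogonalProjectionOnto x))
        have h2 : projCLM W (projCLM W x) = projCLM W x :=
          projCLM_apply_of_mem (Submodule.coe_mem (W.orthogonalProjectionOnto x))
        rw [h1, h2]
        abel
      exact compact_of_selfAdjoint_sq_compact hsa hsq
  · intro h
    refine ⟨fd_aux V W h, ?_⟩
    rw [inf_comm]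
    refine fd_aux W V ?_
    have : projCLM W - projCLM V = -D := by rw [hD]; abel
    rw [this]
    exact h.neg
end

section
/- If B is an RCPPI bounded symmetric bilinear form on a real Hilbert space H, then its index n₋(B) is finite and its nullity n₀(B) is finite. -/
open scoped RealInnerProductSpace

variable {H : Type*} [NormedAddCommGroup H] [InnerProductSpace ℝ H] [CompleteSpace H]

/-- An operator on a real Hilbert space is RCPPI if it is a compact perturbation of a
self-adjoint invertible operator which is coercive (a positive isomorphism). -/
def IsRCPPIOp {E : Type*} [NormedAddCommGroup E] [InnerProductSpace ℝ E] [CompleteSpace E]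
    (A : E →L[ℝ] E) : Prop :=
  ∃ (P : E ≃L[ℝ] E) (K : E →L[ℝ] E), IsSelfAdjoint (P : E →L[ℝ] E) ∧
    (∃ c > 0, ∀ x : E, c * ‖x‖ ^ 2 ≤ ⟪(P : E →L[ℝ] E) x, x⟫) ∧
    IsCompactOperator ⇑K ∧ A = (P : E →L[ℝ] E) + K

/-- An operator on a real Hilbert space is RCPNI if it is a compact perturbation of a
self-adjoint invertible operator which is negative (a negative isomorphism). -/
def IsRCPNIOp {E : Type*} [NormedAddCommGroup E] [InnerProductSpace ℝ E] [CompleteSpace E]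
    (A : E →L[ℝ] E) : Prop :=
  ∃ (N : E ≃L[ℝ] E) (K : E →L[ℝ] E), IsSelfAdjoint (N : E →L[ℝ] E) ∧
    (∃ c > 0, ∀ x : E, ⟪(N : E →L[ℝ] E) x, x⟫ ≤ -(c * ‖x‖ ^ 2)) ∧
    IsCompactOperator ⇑K ∧ A = (N : E →L[ℝ] E) + K

/-- The index `n₋` of the restriction of the form `B` to the subspace `U`: the supremum of
the dimensions of the subspaces of `U` on which `B` is negative definite. -/
noncomputable def negIndexOn (B : H → H → ℝ) (U : Submodule ℝ H) : ℕ∞ :=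
  ⨆ W : {W : Submodule ℝ H // W ≤ U ∧ FiniteDimensional ℝ W ∧ ∀ x ∈ W, x ≠ 0 → B x x < 0},
    (Module.finrank ℝ W.1 : ℕ∞)

/-- The coindex `n₊` of the restriction of the form `B` to the subspace `U`. -/
noncomputable def posIndexOn (B : H → H → ℝ) (U : Submodule ℝ H) : ℕ∞ :=
  ⨆ W : {W : Submodule ℝ H // W ≤ U ∧ FiniteDimensional ℝ W ∧ ∀ x ∈ W, x ≠ 0 → 0 < B x x},
    (Module.finrank ℝ W.1 : ℕ∞)

lemma aux_RCPPI_bound {S : H →L[ℝ] H} (hRCPPI : IsRCPPIOp S) :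
    ∃ m : ℕ, ∀ V : Submodule ℝ H, (∀ x ∈ V, ⟪S x, x⟫ ≤ 0) →
      FiniteDimensional ℝ V ∧ Module.finrank ℝ V ≤ m := by
  obtain ⟨P, K, _hPsa, ⟨c, hc, hP⟩, hK, hSPK⟩ := hRCPPI
  -- a finite (c/2)-net for the image of the unit ball under `K`
  have hcomp : IsCompact (closure <| ⇑K '' Metric.closedBall 0 1) :=
    hK.isCompact_closure_image_closedBall (𝕜₁ := ℝ) 1
  obtain ⟨t, htfin, htcov⟩ :=
    (Metric.totallyBounded_iff.mp hcomp.totallyBounded) (c/2) (by positivity)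
  set Y := Submodule.span ℝ t with hY
  haveI : FiniteDimensional ℝ Y := FiniteDimensional.span_of_finite ℝ htfin
  refine ⟨Module.finrank ℝ Y, fun V hV => ?_⟩
  -- key estimate: ‖K x - π (K x)‖ ≤ (c/2) ‖x‖
  have key : ∀ x : H, ‖K x - Y.orthogonalProjectionOnto (K x)‖ ≤ c/2 * ‖x‖ := by
    have key1 : ∀ x : H, ‖x‖ ≤ 1 → ‖K x - Y.orthogonalProjectionOnto (K x)‖ ≤ c/2 := by
      intro x hx
      have hKx : K x ∈ closure (⇑K '' Metric.closedBall 0 1) :=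
        subset_closure ⟨x, by simpa [Metric.mem_closedBall] using hx, rfl⟩
      obtain ⟨y, hyt, hy⟩ := Set.mem_iUnion₂.mp (htcov hKx)
      have hyY : y ∈ Y := Submodule.subset_span hyt
      have h1 : ‖K x - Y.orthogonalProjectionOnto (K x)‖ ≤ ‖K x - (⟨y, hyY⟩ : Y)‖ := by
        rw [← Submodule.starProjection_apply, Submodule.starProjection_minimal]
        exact ciInf_le ⟨0, fun r ⟨z, hz⟩ => hz ▸ norm_nonneg _⟩ (⟨y, hyY⟩ : Y)
      calc ‖K x - Y.orthogonalProjectionOnto (K x)‖ ≤ ‖K x - y‖ := h1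
        _ ≤ c/2 := le_of_lt (by simpa [dist_eq_norm] using hy)
    intro x
    rcases eq_or_ne x 0 with rfl | hx
    · simp
    · have hxn : (0:ℝ) < ‖x‖ := norm_pos_iff.mpr hx
      have := key1 (‖x‖⁻¹ • x) (by simp [norm_smul, inv_mul_cancel₀ hxn.ne'])
      rw [map_smul, map_smul, Submodule.coe_smul, ← smul_sub, norm_smul,
        norm_inv, norm_norm] at this
      calc ‖K x - Y.orthogonalProjectionOnto (K x)‖
          = ‖x‖ * (‖x‖⁻¹ * ‖K x - Y.orthogonalProjectionOnto (K x)‖) := by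
            field_simp
        _ ≤ ‖x‖ * (c/2) := by
            exact mul_le_mul_of_nonneg_left this hxn.le
        _ = c/2 * ‖x‖ := mul_comm _ _
  -- the map V → Y, x ↦ π (K x), is injective
  set f : V →ₗ[ℝ] Y :=
    ((Y.orthogonalProjectionOnto).toLinearMap.comp K.toLinearMap).comp V.subtype with hf
  have hinj : Function.Injective f := by
    rw [← LinearMap.ker_eq_bot, LinearMap.ker_eq_bot']
    rintro ⟨x, hxV⟩ hfx
    have hFx : (Y.orthogonalProjectionOnto (K x) : H) = 0 := by
      have h := congrArg (Subtype.val) hfx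
      simpa [f] using h
    have h0 : ⟪S x, x⟫ ≤ 0 := hV x hxV
    have hSx : ⟪S x, x⟫ = ⟪(P : H →L[ℝ] H) x, x⟫ + ⟪K x, x⟫ := by
      rw [hSPK]; simp [inner_add_left]
    have hKest : -(c/2 * ‖x‖^2) ≤ ⟪K x, x⟫ := by
      have h1 : ⟪K x, x⟫ = ⟪K x - Y.orthogonalProjectionOnto (K x), x⟫ := by
        rw [inner_sub_left, hFx]; simp
      have h2 : |⟪K x - (Y.orthogonalProjectionOnto (K x) : H), x⟫| ≤ c/2 * ‖x‖ * ‖x‖ :=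
        (abs_real_inner_le_norm _ _).trans (mul_le_mul_of_nonneg_right (key x) (norm_nonneg _))
      rw [h1]
      have h3 := neg_abs_le ⟪K x - (Y.orthogonalProjectionOnto (K x) : H), x⟫
      nlinarith [sq_abs ‖x‖, sq_nonneg ‖x‖]
    rw [hSx] at h0
    have hfinal : c/2 * ‖x‖^2 ≤ 0 := by
      have hPx := hP x
      linarith
    have hx2 : ‖x‖^2 = 0 := le_antisymm
      (le_of_mul_le_mul_left (by linarith : c/2 * ‖x‖^2 ≤ c/2 * 0) (by linarith : (0:ℝ) < c/2))
      (sq_nonneg _)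
    exact Subtype.ext (norm_eq_zero.mp (by
      have := pow_eq_zero_iff (n := 2) (by norm_num) |>.mp hx2
      exact this))
  haveI : FiniteDimensional ℝ V := Module.Finite.of_injective f hinj
  exact ⟨inferInstance, LinearMap.finrank_le_finrank_of_injective hinj⟩

/-- If `B` is an RCPPI bounded symmetric bilinear form with realization `S`, then its index
`n₋(B)` is finite and its nullity `n₀(B) = dim (ker S)` is finite. -/
theorem finite_negIndex_and_nullity_of_RCPPI
    (B : H → H → ℝ) (S : H →L[ℝ] H) (hS : IsSelfAdjoint S)
    (hB : ∀ x y, B x y = ⟪S x, y⟫)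
    (hRCPPI : IsRCPPIOp S) :
    negIndexOn B (⊤ : Submodule ℝ H) ≠ ⊤ ∧
    FiniteDimensional ℝ ↥(LinearMap.ker (S : H →ₗ[ℝ] H)) := by
  obtain ⟨m, hm⟩ := aux_RCPPI_bound hRCPPI
  constructor
  · have hle : negIndexOn B (⊤ : Submodule ℝ H) ≤ (m : ℕ∞) := by
      refine iSup_le fun W => ?_
      have hneg : ∀ x ∈ W.1, ⟪S x, x⟫ ≤ 0 := by
        intro x hx
        rcases eq_or_ne x 0 with rfl | hx0
        · simp
        · have := W.2.2.2 x hx hx0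
          rw [hB] at this; linarith
      exact_mod_cast (hm W.1 hneg).2
    intro htop
    rw [htop, top_le_iff] at hle
    exact ENat.coe_ne_top m hle
  · refine (hm (LinearMap.ker (S : H →ₗ[ℝ] H)) fun x hx => ?_).1
    rw [LinearMap.mem_ker] at hx
    simp [show S x = 0 from hx]
end

section
/- Let g be a nondegenerate symmetric bilinear form on ℝⁿ of index 1 (i.e. the maximal dimension of a subspace of ℝⁿ on which g is negative definite equals 1), let w ∈ ℝⁿ be a nonzero vector with g(w,w) ≤ 0, and let R : [0,1] → End(ℝⁿ) be a continuous curve of g-symmetric endomorphisms satisfying R(t)w = 0 for all t ∈ [0,1]. Let 𝕁 be the set of C² solutions J : [0,1] → ℝⁿ of J'' = R(t)J with J(0) = 0, and for t₀ ∈ (0,1] set 𝕁[t₀] = {J(t₀) : J ∈ 𝕁}. Then g is positive definite on the g-orthogonal complement {v ∈ ℝⁿ : g(v,u) = 0 for all u ∈ 𝕁[t₀]}. (This is the key step showing that conjugate points along causal Lorentzian geodesics have signature equal to their multiplicity.) -/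
open Set

variable {n : ℕ} (g : (Fin n → ℝ) →ₗ[ℝ] (Fin n → ℝ) →ₗ[ℝ] ℝ)


lemma aux_nonneg (hgsymm : ∀ x y, g x y = g y x)
    (hgmax : ∀ W : Submodule ℝ (Fin n → ℝ),
      (∀ x ∈ W, x ≠ 0 → g x x < 0) → Module.finrank ℝ W ≤ 1)
    (z : Fin n → ℝ) (hz : g z z < 0) (x : Fin n → ℝ) (hxz : g x z = 0) :
    0 ≤ g x x := by
  by_contra h
  push_neg at h
  have hx0 : x ≠ 0 := by rintro rfl; simp at h
  have hz0 : z ≠ 0 := by rintro rfl; simp at hz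
  have hzx : g z x = 0 := by rw [hgsymm]; exact hxz
  have hli : LinearIndependent ℝ ![x, z] := by
    rw [LinearIndependent.pair_iff]
    intro s t hst
    have h1 : g (s • x + t • z) x = 0 := by rw [hst]; simp
    have h2 : g (s • x + t • z) z = 0 := by rw [hst]; simp
    simp only [map_add, map_smul, LinearMap.add_apply, LinearMap.smul_apply,
      smul_eq_mul, hxz, hzx] at h1 h2
    constructor
    · rcases mul_eq_zero.mp (by linarith : s * g x x = 0) with h' | h'
      · exact h'
      · exact absurd h' (ne_of_lt h)
    · rcases mul_eq_zero.mp (by linarith : t * g z z = 0) with h' | h'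
      · exact h'
      · exact absurd h' (ne_of_lt hz)
  have hcard : Module.finrank ℝ (Submodule.span ℝ (Set.range ![x, z])) = 2 := by
    rw [finrank_span_eq_card hli]; simp
  have hneg : ∀ y ∈ Submodule.span ℝ (Set.range ![x, z]), y ≠ 0 → g y y < 0 := by
    intro y hy hy0
    have hset : Set.range ![x, z] = {x, z} := by
      simp only [Matrix.range_cons, Matrix.range_empty, Set.union_empty,
        Set.union_singleton]
      exact Set.pair_comm z x
    rw [hset, Submodule.mem_span_pair] at hy
    obtain ⟨a, b, rfl⟩ := hy
    have hab : a ≠ 0 ∨ b ≠ 0 := by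
      by_contra hc; push_neg at hc; rcases hc with ⟨rfl, rfl⟩; simp at hy0
    have hexp : g (a • x + b • z) (a • x + b • z) = a^2 * g x x + b^2 * g z z := by
      simp only [map_add, map_smul, LinearMap.add_apply, LinearMap.smul_apply,
        smul_eq_mul, hxz, hzx]
      ring
    rw [hexp]
    rcases hab with h' | h'
    · nlinarith [sq_nonneg a, sq_nonneg b, sq_pos_of_ne_zero h']
    · nlinarith [sq_nonneg a, sq_nonneg b, sq_pos_of_ne_zero h']
  have := hgmax _ hneg
  omega

lemma aux_pos (hgsymm : ∀ x y, g x y = g y x)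
    (hgnondeg : ∀ x, (∀ y, g x y = 0) → x = 0)
    (hgmax : ∀ W : Submodule ℝ (Fin n → ℝ),
      (∀ x ∈ W, x ≠ 0 → g x x < 0) → Module.finrank ℝ W ≤ 1)
    (z : Fin n → ℝ) (hz : g z z < 0) (x : Fin n → ℝ) (hxz : g x z = 0)
    (hx : x ≠ 0) : 0 < g x x := by
  have h0 : 0 ≤ g x x := aux_nonneg g hgsymm hgmax z hz x hxz
  rcases h0.lt_or_eq with h | h
  · exact h
  exfalso
  apply hx
  apply hgnondeg
  intro y
  have hzz : g z z ≠ 0 := ne_of_lt hz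
  set y' := y - (g z y / g z z) • z with hy'def
  have hy'z : g y' z = 0 := by
    simp only [hy'def, map_sub, map_smul, LinearMap.sub_apply, LinearMap.smul_apply,
      smul_eq_mul]
    rw [hgsymm y z]
    field_simp
    ring
  have hBnn : 0 ≤ g y' y' := aux_nonneg g hgsymm hgmax z hz y' hy'z
  have key : ∀ t : ℝ, 0 ≤ 2 * t * g x y' + t ^ 2 * g y' y' := by
    intro t
    have hmem : g (x + t • y') z = 0 := by
      simp [map_add, LinearMap.add_apply, LinearMap.smul_apply, smul_eq_mul, hxz, hy'z]
    have h1 := aux_nonneg g hgsymm hgmax z hz _ hmem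
    have hexp : g (x + t • y') (x + t • y') = 2 * t * g x y' + t ^ 2 * g y' y' := by
      simp only [map_add, map_smul, LinearMap.add_apply, LinearMap.smul_apply, smul_eq_mul]
      rw [hgsymm y' x, ← h]
      ring
    linarith [hexp ▸ h1]
  have hxy' : g x y' = 0 := by
    have ht := key (-(g x y') / (g y' y' + 1))
    have hB1 : (0:ℝ) < g y' y' + 1 := by linarith
    have heq : 2 * (-(g x y') / (g y' y' + 1)) * g x y'
        + (-(g x y') / (g y' y' + 1)) ^ 2 * g y' y'
        = -((g x y') ^ 2 * (g y' y' + 2)) / (g y' y' + 1) ^ 2 := by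
      field_simp
      ring
    rw [heq] at ht
    have h2 : (0:ℝ) < (g y' y' + 1) ^ 2 := by positivity
    have h3 := mul_nonneg ht h2.le
    rw [div_mul_cancel₀ _ (ne_of_gt h2)] at h3
    have h4 : (g x y') ^ 2 ≤ 0 := by nlinarith
    have h5 : (g x y') ^ 2 = 0 := le_antisymm h4 (sq_nonneg _)
    exact pow_eq_zero_iff two_ne_zero |>.mp h5
  have h6 : g x y' = g x y := by
    simp [hy'def, map_sub, map_smul, smul_eq_mul, hxz]
  rw [← h6]
  exact hxy'

lemma aux_null (hgsymm : ∀ x y, g x y = g y x)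
    (hgnondeg : ∀ x, (∀ y, g x y = 0) → x = 0)
    (hgneg : ∃ W : Submodule ℝ (Fin n → ℝ),
      Module.finrank ℝ W = 1 ∧ ∀ x ∈ W, x ≠ 0 → g x x < 0)
    (hgmax : ∀ W : Submodule ℝ (Fin n → ℝ),
      (∀ x ∈ W, x ≠ 0 → g x x < 0) → Module.finrank ℝ W ≤ 1)
    (w : Fin n → ℝ) (hw : w ≠ 0) (hww : g w w = 0)
    (v : Fin n → ℝ) (hv : v ≠ 0) (hvw : g v w = 0) (hvv : g v v = 0) :
    ∃ c : ℝ, c ≠ 0 ∧ v = c • w := by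
  obtain ⟨W, hW1, hWneg⟩ := hgneg
  have hWbot : W ≠ ⊥ := by
    intro hbot
    rw [hbot] at hW1
    simp at hW1
  obtain ⟨z, hzW, hz0⟩ := Submodule.exists_mem_ne_zero_of_ne_bot hWbot
  have hz : g z z < 0 := hWneg z hzW hz0
  have hgzw : g z w ≠ 0 := by
    intro h0
    have hwz : g w z = 0 := by rw [hgsymm]; exact h0
    have := aux_pos g hgsymm hgnondeg hgmax z hz w hwz hw
    linarith
  set c := g z v / g z w with hc
  set d := v - c • w with hd
  have hdz : g d z = 0 := by
    simp only [hd, map_sub, map_smul, LinearMap.sub_apply, LinearMap.smul_apply, smul_eq_mul]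
    rw [hgsymm v z, hgsymm w z, hc]
    field_simp
    ring
  have hdd : g d d = 0 := by
    simp only [hd, map_sub, map_smul, LinearMap.sub_apply, LinearMap.smul_apply, smul_eq_mul]
    rw [hgsymm w v]
    rw [hvw, hvv, hww]
    ring
  have hd0 : d = 0 := by
    by_contra hd0
    have := aux_pos g hgsymm hgnondeg hgmax z hz d hdz hd0
    linarith
  have hveq : v = c • w := by
    have := sub_eq_zero.mp hd0
    exact this
  refine ⟨c, ?_, hveq⟩
  intro hc0
  rw [hc0, zero_smul] at hveq
  exact hv hveq



lemma const_of_deriv_zero (f : ℝ → ℝ)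
    (h : ∀ t ∈ Icc (0:ℝ) 1, HasDerivWithinAt f 0 (Icc 0 1) t) :
    ∀ t ∈ Icc (0:ℝ) 1, f t = f 0 := by
  apply constant_of_has_deriv_right_zero
  · intro t ht
    exact (h t ht).continuousWithinAt
  · intro t ht
    exact (h t (Ico_subset_Icc_self ht)).mono_of_mem_nhdsWithin (Icc_mem_nhdsGE_of_mem ht)

lemma pairing {n : ℕ} (g : (Fin n → ℝ) →ₗ[ℝ] (Fin n → ℝ) →ₗ[ℝ] ℝ)
    (w : Fin n → ℝ) (R : ℝ → ((Fin n → ℝ) →L[ℝ] (Fin n → ℝ)))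
    (hRsymm : ∀ t ∈ Icc (0:ℝ) 1, ∀ x y, g (R t x) y = g x (R t y))
    (hRw : ∀ t ∈ Icc (0:ℝ) 1, R t w = 0)
    (J J' : ℝ → (Fin n → ℝ))
    (hJ : ∀ t ∈ Icc (0:ℝ) 1, HasDerivWithinAt J (J' t) (Icc 0 1) t)
    (hJ' : ∀ t ∈ Icc (0:ℝ) 1, HasDerivWithinAt J' (R t (J t)) (Icc 0 1) t)
    (hJ0 : J 0 = 0) :
    ∀ t ∈ Icc (0:ℝ) 1, g w (J t) = t * g w (J' 0) := by
  set G : (Fin n → ℝ) →L[ℝ] ℝ := LinearMap.toContinuousLinearMap (g w) with hG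
  have hGapp : ∀ x, G x = g w x := fun x => rfl
  have hGJ : ∀ t ∈ Icc (0:ℝ) 1,
      HasDerivWithinAt (fun s => g w (J s)) (g w (J' t)) (Icc 0 1) t := by
    intro t ht
    exact G.hasFDerivAt.comp_hasDerivWithinAt t (hJ t ht)
  have hGJ' : ∀ t ∈ Icc (0:ℝ) 1,
      HasDerivWithinAt (fun s => g w (J' s)) 0 (Icc 0 1) t := by
    intro t ht
    have hd := G.hasFDerivAt.comp_hasDerivWithinAt t (hJ' t ht)
    have hzero : G (R t (J t)) = 0 := by
      rw [hGapp, ← hRsymm t ht w (J t), hRw t ht]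
      simp
    rw [hzero] at hd
    exact hd
  have hconst := const_of_deriv_zero _ hGJ'
  intro t ht
  set c : ℝ := g w (J' 0) with hc
  have hφ : ∀ s ∈ Icc (0:ℝ) 1,
      HasDerivWithinAt (fun s => g w (J s) - s * c) 0 (Icc 0 1) s := by
    intro s hs
    have h1 := (hGJ s hs).sub ((hasDerivAt_mul_const c).hasDerivWithinAt)
    have h2 : g w (J' s) - c = 0 := by
      rw [hc, hconst s hs]
      ring
    rwa [h2] at h1
  have hval := const_of_deriv_zero _ hφ t ht
  simp only [hJ0, map_zero, zero_mul, sub_zero, mul_zero, sub_self] at hval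
  linarith [hval]


lemma ode_step {n : ℕ} (L : ℝ → ((Fin n → ℝ) × (Fin n → ℝ) →L[ℝ] (Fin n → ℝ) × (Fin n → ℝ)))
    (Km : ℝ) (hKm1 : 1 ≤ Km)
    (hLnorm : ∀ t ∈ Icc (0:ℝ) 1, ‖L t‖ ≤ Km)
    (hLcont : ∀ x, ContinuousOn (fun t => L t x) (Icc (0:ℝ) 1))
    (a b : ℝ) (ha : a ∈ Icc (0:ℝ) 1) (hb : b ∈ Icc (0:ℝ) 1) (hab : a ≤ b)
    (hlen : b - a ≤ 1 / (2 * Km)) (p₀ : (Fin n → ℝ) × (Fin n → ℝ)) :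
    ∃ f : ℝ → (Fin n → ℝ) × (Fin n → ℝ), f a = p₀ ∧
      ∀ t ∈ Icc a b, HasDerivWithinAt f (L t (f t)) (Icc a b) t := by
  have hsub : Icc a b ⊆ Icc (0:ℝ) 1 := Icc_subset_Icc ha.1 hb.2
  have hKm0 : (0:ℝ) < Km := lt_of_lt_of_le one_pos hKm1
  set C : ℝ := Km * (2 * ‖p₀‖ + 1) with hC
  have hCpos : 0 ≤ C := by positivity
  have hpl : IsPicardLindelof (fun t x => L t x) (tmin := a) (tmax := b) ⟨a, le_refl a, hab⟩ p₀
      (‖p₀‖₊ + 1) 0 C.toNNReal Km.toNNReal := by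
    constructor
    · intro t ht
      have h1 : LipschitzWith Km.toNNReal (L t) := by
        apply (L t).lipschitz.weaken
        rw [← NNReal.coe_le_coe, coe_nnnorm, Real.coe_toNNReal _ hKm0.le]
        exact hLnorm t (hsub ht)
      exact h1.lipschitzOnWith
    · intro x _
      exact hLcont x |>.mono hsub
    · intro t ht x hx
      have hxnorm : ‖x‖ ≤ 2 * ‖p₀‖ + 1 := by
        have := mem_closedBall_iff_norm.mp hx
        simp only [NNReal.coe_add, coe_nnnorm, NNReal.coe_one] at this
        have h2 := norm_sub_norm_le x p₀
        linarith
      calc ‖L t x‖ ≤ ‖L t‖ * ‖x‖ := (L t).le_opNorm x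
        _ ≤ Km * (2 * ‖p₀‖ + 1) := by
            apply mul_le_mul (hLnorm t (hsub ht)) hxnorm (norm_nonneg x) hKm0.le
        _ = (C.toNNReal : ℝ) := (Real.coe_toNNReal _ hCpos).symm
    · show (C.toNNReal : ℝ) * max (b - a) (a - a) ≤ ((‖p₀‖₊ + 1 : NNReal) : ℝ) - ((0:NNReal):ℝ)
      rw [Real.coe_toNNReal _ hCpos, NNReal.coe_add, coe_nnnorm, NNReal.coe_one, NNReal.coe_zero,
        sub_zero]
      have hmax : max (b - a) (a - a) = b - a := by
        rw [sub_self]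
        exact max_eq_left (by linarith)
      rw [hmax]
      calc C * (b - a) ≤ C * (1 / (2 * Km)) := by
            apply mul_le_mul_of_nonneg_left hlen hCpos
        _ = (2 * ‖p₀‖ + 1) / 2 := by
            rw [hC]; field_simp
        _ ≤ ‖p₀‖ + 1 := by
            have := norm_nonneg p₀
            linarith
  obtain ⟨f, hf0, hf⟩ := hpl.exists_eq_forall_mem_Icc_hasDerivWithinAt₀
  exact ⟨f, hf0, hf⟩

lemma ode_exists {n : ℕ} (R : ℝ → ((Fin n → ℝ) →L[ℝ] (Fin n → ℝ)))
    (hRcont : ContinuousOn R (Icc 0 1)) (u₀ : Fin n → ℝ) :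
    ∃ J J' : ℝ → (Fin n → ℝ), J 0 = 0 ∧ J' 0 = u₀ ∧
      (∀ t ∈ Icc (0:ℝ) 1, HasDerivWithinAt J (J' t) (Icc 0 1) t) ∧
      (∀ t ∈ Icc (0:ℝ) 1, HasDerivWithinAt J' (R t (J t)) (Icc 0 1) t) := by
  classical
  set E := (Fin n → ℝ) × (Fin n → ℝ)
  set L : ℝ → (E →L[ℝ] E) := fun t =>
    (ContinuousLinearMap.snd ℝ (Fin n → ℝ) (Fin n → ℝ)).prod
      ((R t).comp (ContinuousLinearMap.fst ℝ (Fin n → ℝ) (Fin n → ℝ))) with hLdef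
  have hLapp : ∀ t (p : E), L t p = (p.2, R t p.1) := fun t p => rfl
  obtain ⟨M, hM⟩ := (isCompact_Icc (a := (0:ℝ)) (b := 1)).exists_bound_of_continuousOn hRcont
  set Km : ℝ := max 1 M with hKm
  have hKm1 : (1:ℝ) ≤ Km := le_max_left _ _
  have hKm0 : (0:ℝ) < Km := lt_of_lt_of_le one_pos hKm1
  have hLnorm : ∀ t ∈ Icc (0:ℝ) 1, ‖L t‖ ≤ Km := by
    intro t ht
    apply ContinuousLinearMap.opNorm_le_bound _ hKm0.le
    intro p
    rw [hLapp]
    rw [Prod.norm_def]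
    apply max_le
    · calc ‖p.2‖ ≤ ‖p‖ := norm_snd_le p
        _ ≤ Km * ‖p‖ := le_mul_of_one_le_left (norm_nonneg p) hKm1
    · calc ‖R t p.1‖ ≤ ‖R t‖ * ‖p.1‖ := (R t).le_opNorm p.1
        _ ≤ M * ‖p‖ := mul_le_mul (hM t ht) (norm_fst_le p) (norm_nonneg _)
            ((norm_nonneg (R t)).trans (hM t ht))
        _ ≤ Km * ‖p‖ := mul_le_mul_of_nonneg_right (le_max_right _ _) (norm_nonneg p)
  have hLcont : ∀ x : E, ContinuousOn (fun t => L t x) (Icc (0:ℝ) 1) := by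
    intro x
    have heq : (fun t => L t x) = fun t => ((x.2 : Fin n → ℝ), R t x.1) := by
      funext t; rw [hLapp]
    rw [heq]
    exact continuousOn_const.prodMk (hRcont.clm_apply continuousOn_const)
  obtain ⟨N, hN⟩ := exists_nat_ge (2 * Km)
  have hN0 : (0:ℝ) < N := lt_of_lt_of_le (by linarith) hN
  have hstep : (1:ℝ)/N ≤ 1/(2*Km) := by
    apply one_div_le_one_div_of_le (by linarith) hN
  have claim : ∀ k : ℕ, (k:ℝ) ≤ N → ∃ f : ℝ → E, f 0 = (0, u₀) ∧
      ∀ t ∈ Icc (0:ℝ) ((k:ℝ)/N), HasDerivWithinAt f (L t (f t)) (Icc 0 ((k:ℝ)/N)) t := by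
    intro k
    induction k with
    | zero =>
      intro _
      have h0 : ((0:ℕ):ℝ)/N = 0 := by simp
      rw [h0]
      obtain ⟨f, hf0, hf⟩ := ode_step L Km hKm1 hLnorm hLcont 0 0 (by constructor <;> norm_num)
        (by constructor <;> norm_num) le_rfl (by norm_num; positivity) ((0:Fin n → ℝ), u₀)
      exact ⟨f, hf0, hf⟩
    | succ k ih =>
      intro hk1
      have hkN : (k:ℝ) ≤ N := by push_cast at hk1 ⊢; linarith
      obtain ⟨f, hf0, hf⟩ := ih hkN
      set A : ℝ := (k:ℝ)/N with hAdef
      set B : ℝ := (((k+1:ℕ)):ℝ)/N with hBdef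
      have hA0 : 0 ≤ A := by positivity
      have hAB : A ≤ B := by
        rw [hAdef, hBdef]
        apply (div_le_div_iff_of_pos_right hN0).mpr
        push_cast; linarith
      have hB1 : B ≤ 1 := by
        rw [hBdef, div_le_one hN0]
        exact_mod_cast hk1
      have hBA : B - A ≤ 1/(2*Km) := by
        have hBAeq : B - A = 1/N := by
          rw [hAdef, hBdef]
          push_cast
          field_simp
          ring
        rw [hBAeq]
        exact hstep
      obtain ⟨h, hh0, hh⟩ := ode_step L Km hKm1 hLnorm hLcont A B ⟨hA0, hAB.trans hB1⟩
        ⟨hA0.trans hAB, hB1⟩ hAB hBA (f A)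
      refine ⟨fun t => if t ≤ A then f t else h t, ?_, ?_⟩
      · simp only [if_pos hA0]
        exact hf0
      · intro t ht
        set F' : ℝ → E := fun t => if t ≤ A then f t else h t with hF'
        have hunion : Icc (0:ℝ) A ∪ Icc A B = Icc 0 B := Icc_union_Icc_eq_Icc hA0 hAB
        have hEq1 : EqOn F' f (Icc 0 A) := fun s hs => if_pos hs.2
        have hEq2 : EqOn F' h (Icc A B) := by
          intro s hs
          by_cases hsA : s ≤ A
          · have hseq : s = A := le_antisymm hsA hs.1
            rw [hseq]
            show (if A ≤ A then f A else h A) = h A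
            rw [if_pos le_rfl, hh0]
          · simp only [hF', if_neg hsA]
        have d1 : HasDerivWithinAt F' (L t (F' t)) (Icc 0 A) t := by
          by_cases htA : t ≤ A
          · have htmem : t ∈ Icc (0:ℝ) A := ⟨ht.1, htA⟩
            rw [show F' t = f t from hEq1 htmem]
            exact (hf t htmem).congr hEq1 (hEq1 htmem)
          · rw [hasDerivWithinAt_iff_hasFDerivWithinAt]
            apply HasFDerivWithinAt.of_notMem_closure
            rw [isClosed_Icc.closure_eq]
            exact fun hc => htA hc.2
        have d2 : HasDerivWithinAt F' (L t (F' t)) (Icc A B) t := by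
          by_cases hAt : A ≤ t
          · have htmem : t ∈ Icc A B := ⟨hAt, ht.2⟩
            rw [show F' t = h t from hEq2 htmem]
            exact (hh t htmem).congr hEq2 (hEq2 htmem)
          · rw [hasDerivWithinAt_iff_hasFDerivWithinAt]
            apply HasFDerivWithinAt.of_notMem_closure
            rw [isClosed_Icc.closure_eq]
            exact fun hc => hAt hc.1
        exact hunion ▸ d1.union d2
  obtain ⟨f, hf0, hf⟩ := claim N (le_refl _)
  have hNN : ((N:ℕ):ℝ)/N = 1 := div_self (ne_of_gt hN0)
  rw [hNN] at hf
  refine ⟨fun t => (f t).1, fun t => (f t).2, ?_, ?_, ?_, ?_⟩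
  · simp [hf0]
  · simp [hf0]
  · intro t ht
    have hd := (ContinuousLinearMap.fst ℝ (Fin n → ℝ) (Fin n → ℝ)).hasFDerivAt.comp_hasDerivWithinAt t (hf t ht)
    exact hd
  · intro t ht
    have hd := (ContinuousLinearMap.snd ℝ (Fin n → ℝ) (Fin n → ℝ)).hasFDerivAt.comp_hasDerivWithinAt t (hf t ht)
    exact hd

/-- Key step for causal Lorentzian geodesics: let `g` have index `1`, let `w ≠ 0` be a
causal vector (`g(w,w) ≤ 0`) with `R(t)w = 0` for all `t`, and let
`𝕁[t₀] = {J(t₀) : J'' = R(t)J, J(0) = 0}`.  Then `g` is positive definite on the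
`g`-orthogonal complement of `𝕁[t₀]`. -/
theorem posDef_on_orthogonal_of_conjugate_space (n : ℕ)
    (g : (Fin n → ℝ) →ₗ[ℝ] (Fin n → ℝ) →ₗ[ℝ] ℝ)
    (hgsymm : ∀ x y, g x y = g y x)
    (hgnondeg : ∀ x, (∀ y, g x y = 0) → x = 0)
    (hgneg : ∃ W : Submodule ℝ (Fin n → ℝ),
      Module.finrank ℝ W = 1 ∧ ∀ x ∈ W, x ≠ 0 → g x x < 0)
    (hgmax : ∀ W : Submodule ℝ (Fin n → ℝ),
      (∀ x ∈ W, x ≠ 0 → g x x < 0) → Module.finrank ℝ W ≤ 1)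
    (w : Fin n → ℝ) (hw : w ≠ 0) (hww : g w w ≤ 0)
    (R : ℝ → ((Fin n → ℝ) →L[ℝ] (Fin n → ℝ)))
    (hRcont : ContinuousOn R (Icc 0 1))
    (hRsymm : ∀ t ∈ Icc (0:ℝ) 1, ∀ x y, g (R t x) y = g x (R t y))
    (hRw : ∀ t ∈ Icc (0:ℝ) 1, R t w = 0)
    (t₀ : ℝ) (ht₀ : t₀ ∈ Ioc (0:ℝ) 1) :
    ∀ v : Fin n → ℝ, v ≠ 0 →
      (∀ u : Fin n → ℝ,
        (∃ J J' : ℝ → (Fin n → ℝ),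
          (∀ t ∈ Icc (0:ℝ) 1, HasDerivWithinAt J (J' t) (Icc 0 1) t) ∧
          (∀ t ∈ Icc (0:ℝ) 1, HasDerivWithinAt J' (R t (J t)) (Icc 0 1) t) ∧
          J 0 = 0 ∧ u = J t₀) → g v u = 0) →
      0 < g v v := by
  have ht01 : t₀ ∈ Icc (0:ℝ) 1 := ⟨ht₀.1.le, ht₀.2⟩
  have ht0ne : t₀ ≠ 0 := ne_of_gt ht₀.1
  intro v hv hortho
  have hsol_tw : g v (t₀ • w) = 0 := by
    apply hortho (t₀ • w)
    refine ⟨fun t => t • w, fun _ => w, ?_, ?_, ?_, rfl⟩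
    · intro t ht
      have := (hasDerivAt_id t).smul_const w
      simpa using this.hasDerivWithinAt
    · intro t ht
      have hz : R t (t • w) = 0 := by rw [map_smul, hRw t ht, smul_zero]
      rw [hz]
      exact (hasDerivWithinAt_const t _ w)
    · simp
  have hvw : g v w = 0 := by
    have h1 : t₀ * g v w = 0 := by simpa [map_smul] using hsol_tw
    rcases mul_eq_zero.mp h1 with h2 | h2
    · exact absurd h2 ht0ne
    · exact h2
  rcases hww.lt_or_eq with hlt | heq
  · exact aux_pos g hgsymm hgnondeg hgmax w hlt v hvw hv
  · by_contra hcon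
    push_neg at hcon
    rcases hcon.lt_or_eq with hvlt | hveq
    · have hwv : g w v = 0 := by rw [hgsymm]; exact hvw
      have hpos := aux_pos g hgsymm hgnondeg hgmax v hvlt w hwv hw
      rw [heq] at hpos
      exact lt_irrefl _ hpos
    · obtain ⟨c, hc0, hvcw⟩ := aux_null g hgsymm hgnondeg hgneg hgmax w hw heq v hv hvw hveq
      obtain ⟨u₀, hu₀⟩ : ∃ u₀, g w u₀ ≠ 0 := by
        by_contra hall
        push_neg at hall
        exact hw (hgnondeg w hall)
      obtain ⟨J, J', hJ0, hJ'0, hJ, hJ'⟩ := ode_exists R hRcont u₀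
      have hpair := pairing g w R hRsymm hRw J J' hJ hJ' hJ0 t₀ ht01
      have horth := hortho (J t₀) ⟨J, J', hJ, hJ', hJ0, rfl⟩
      rw [hvcw] at horth
      simp only [map_smul, LinearMap.smul_apply, smul_eq_mul] at horth
      rw [hpair, hJ'0] at horth
      rcases mul_eq_zero.mp horth with h2 | h2
      · exact hc0 h2
      rcases mul_eq_zero.mp h2 with h3 | h3
      · exact ht0ne h3
      · exact hu₀ h3
end
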